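/- Let X be a solution of the Multiway Cut instance (G',T,k) constructed from an untangled GFVS instance with fixed labeling φ on Z (where terminals T = { φ(u)·Λ((u,v)) : (u,v) ∈ A(G), u ∈ Z, v ∉ Z } and G' has edges uv for arcs inside V(G)∖Z plus edges gv for g = φ(u)·Λ((u,v))). Define λ on V(G)∖X by λ(v) = φ(v) for v ∈ Z, λ(v) = g if v ∈ V(G)∖Z is reachable from terminal g ∈ T in G'∖X, and λ(v) = 1_Σ otherwise. Then λ is a consistent labeling of (G∖X, Λ) extending φ. -/

import Mathlib

/-- Adjacency of the Multiway Cut graph `G'` built from an untangled instance and a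
fixed labeling `φ` on `Z`: vertices are `V∖Z` plus terminals (group elements),
with `uv` for arcs inside `V∖Z` and `gv` whenever `φ(u)·Λ((u,v)) = g` for some
arc `(u,v)` with `u ∈ Z`, `v ∉ Z`. -/
def mcAdj {V Γ : Type*} [Group Γ] (Arc : V → V → Prop) (Λ : V → V → Γ)
    (Z : Set V) (φ : V → Γ) : (V ⊕ Γ) → (V ⊕ Γ) → Prop
  | Sum.inl u, Sum.inl w => u ∉ Z ∧ w ∉ Z ∧ Arc u w
  | Sum.inl v, Sum.inr g => v ∉ Z ∧ ∃ u ∈ Z, Arc u v ∧ φ u * Λ u v = g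
  | Sum.inr g, Sum.inl v => v ∉ Z ∧ ∃ u ∈ Z, Arc u v ∧ φ u * Λ u v = g
  | Sum.inr _, Sum.inr _ => False

/-- Reachability from `a` to `b` in `G'` after removing the vertex set `X ⊆ V∖Z`. -/
def mcReach {V Γ : Type*} [Group Γ] (Arc : V → V → Prop) (Λ : V → V → Γ)
    (Z : Set V) (φ : V → Γ) (X : Finset V) (a b : V ⊕ Γ) : Prop :=
  ∃ l : List (V ⊕ Γ), l.Chain' (mcAdj Arc Λ Z φ) ∧
    l.head? = some a ∧ l.getLast? = some b ∧ ∀ x ∈ X, Sum.inl x ∉ l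

/-- Terminals of the Multiway Cut instance. -/
def mcTerminals {V Γ : Type*} [Group Γ] (Arc : V → V → Prop) (Λ : V → V → Γ)
    (Z : Set V) (φ : V → Γ) : Set Γ :=
  {g : Γ | ∃ u v, u ∈ Z ∧ v ∉ Z ∧ Arc u v ∧ φ u * Λ u v = g}

/-- Forward direction of the reduction to Multiway Cut: from a multiway cut `X`,
the labeling assigning `φ` on `Z`, the unique reachable terminal on `V∖Z`, and
`1` on unreachable vertices, is a consistent labeling of `(G∖X,Λ)` extending `φ`. -/
theorem multiway_cut_gives_consistent_labeling {V Γ : Type*}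
    [Fintype V] [DecidableEq V] [Group Γ]
    (Arc : V → V → Prop) (Λ : V → V → Γ)
    (hsymm : ∀ u v, Arc u v → Arc v u)
    (hlab : ∀ u v, Arc u v → Λ u v = (Λ v u)⁻¹)
    (Z : Set V)
    (huntangled : ∀ u v, Arc u v → u ∉ Z → v ∉ Z → Λ u v = 1)
    (φ : V → Γ)
    (hφ : ∀ u v, u ∈ Z → v ∈ Z → Arc u v → φ v = φ u * Λ u v)
    (k : ℕ) (X : Finset V) (hXZ : ∀ x ∈ X, x ∉ Z) (hXk : X.card ≤ k)
    (hsep : ∀ g₁ ∈ mcTerminals Arc Λ Z φ, ∀ g₂ ∈ mcTerminals Arc Λ Z φ, g₁ ≠ g₂ →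
      ¬ mcReach Arc Λ Z φ X (Sum.inr g₁) (Sum.inr g₂))
    (lam : V → Γ)
    (hlamZ : ∀ v ∈ Z, lam v = φ v)
    (hlamReach : ∀ v, v ∉ Z → v ∉ X → ∀ g ∈ mcTerminals Arc Λ Z φ,
      mcReach Arc Λ Z φ X (Sum.inr g) (Sum.inl v) → lam v = g)
    (hlamOne : ∀ v, v ∉ Z → v ∉ X →
      (¬ ∃ g ∈ mcTerminals Arc Λ Z φ, mcReach Arc Λ Z φ X (Sum.inr g) (Sum.inl v)) →
      lam v = 1) :
    (∀ u v, Arc u v → u ∉ X → v ∉ X → lam v = lam u * Λ u v) ∧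
    (∀ z ∈ Z, lam z = φ z) := by
  have snoc : ∀ (a b c : V ⊕ Γ), mcReach Arc Λ Z φ X a b → mcAdj Arc Λ Z φ b c →
      (∀ x ∈ X, Sum.inl x ≠ c) → mcReach Arc Λ Z φ X a c := by
    intro a b c h hbc hc
    obtain ⟨l, hch, hhd, hlast, hX⟩ := h
    refine ⟨l ++ [c], ?_, ?_, ?_, ?_⟩
    · rw [List.Chain', List.isChain_append]
      refine ⟨hch, List.isChain_singleton _, fun x hx y hy => ?_⟩
      rw [hlast] at hx
      simp only [List.head?_cons, Option.mem_some_iff] at hx hy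
      subst hx; subst hy
      simpa using hbc
    · cases l with
      | nil => simp at hhd
      | cons h t => simpa using hhd
    · simp [List.getLast?_append]
    · intro x hx hmem
      rcases List.mem_append.mp hmem with h | h
      · exact hX x hx h
      · exact hc x hx (List.mem_singleton.mp h)
  refine ⟨?_, hlamZ⟩
  intro u v harc huX hvX
  by_cases huZ : u ∈ Z <;> by_cases hvZ : v ∈ Z
  · rw [hlamZ u huZ, hlamZ v hvZ]; exact hφ u v huZ hvZ harc
  · -- u ∈ Z, v ∉ Z
    have hg : φ u * Λ u v ∈ mcTerminals Arc Λ Z φ := ⟨u, v, huZ, hvZ, harc, rfl⟩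
    have hr : mcReach Arc Λ Z φ X (Sum.inr (φ u * Λ u v)) (Sum.inl v) := by
      refine ⟨[Sum.inr (φ u * Λ u v), Sum.inl v], ?_, rfl, rfl, ?_⟩
      · exact List.isChain_cons_cons.mpr ⟨⟨hvZ, u, huZ, harc, rfl⟩, List.isChain_singleton _⟩
      · intro x hx hmem
        rcases List.mem_cons.mp hmem with h | h
        · exact absurd h (by simp)
        · rcases List.mem_singleton.mp h with h
          exact hvX (by rwa [Sum.inl.injEq] at h ▸ hx)
    rw [hlamReach v hvZ hvX _ hg hr, hlamZ u huZ]
  · -- u ∉ Z, v ∈ Z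
    have harc' := hsymm u v harc
    have hg : φ v * Λ v u ∈ mcTerminals Arc Λ Z φ := ⟨v, u, hvZ, huZ, harc', rfl⟩
    have hr : mcReach Arc Λ Z φ X (Sum.inr (φ v * Λ v u)) (Sum.inl u) := by
      refine ⟨[Sum.inr (φ v * Λ v u), Sum.inl u], ?_, rfl, rfl, ?_⟩
      · exact List.isChain_cons_cons.mpr ⟨⟨huZ, v, hvZ, harc', rfl⟩, List.isChain_singleton _⟩
      · intro x hx hmem
        rcases List.mem_cons.mp hmem with h | h
        · exact absurd h (by simp)
        · rcases List.mem_singleton.mp h with h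
          exact huX (by rwa [Sum.inl.injEq] at h ▸ hx)
    rw [hlamReach u huZ huX _ hg hr, hlamZ v hvZ, hlab u v harc]
    group
  · -- u ∉ Z, v ∉ Z
    have hΛ : Λ u v = 1 := huntangled u v harc huZ hvZ
    rw [hΛ, mul_one]
    by_cases hreach : ∃ g ∈ mcTerminals Arc Λ Z φ,
        mcReach Arc Λ Z φ X (Sum.inr g) (Sum.inl u)
    · obtain ⟨g, hg, hr⟩ := hreach
      have hrv : mcReach Arc Λ Z φ X (Sum.inr g) (Sum.inl v) := by
        refine snoc _ _ _ hr ⟨huZ, hvZ, harc⟩ ?_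
        intro x hx h
        exact hvX (by rwa [Sum.inl.injEq] at h ▸ hx)
      rw [hlamReach v hvZ hvX g hg hrv, hlamReach u huZ huX g hg hr]
    · have hreachv : ¬ ∃ g ∈ mcTerminals Arc Λ Z φ,
          mcReach Arc Λ Z φ X (Sum.inr g) (Sum.inl v) := by
        rintro ⟨g, hg, hr⟩
        refine hreach ⟨g, hg, ?_⟩
        refine snoc _ _ _ hr ⟨hvZ, huZ, hsymm u v harc⟩ ?_
        intro x hx h
        exact huX (by rwa [Sum.inl.injEq] at h ▸ hx)
      rw [hlamOne v hvZ hvX hreachv, hlamOne u huZ huX hreach]
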